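/- Let (T_n) be a sequence of linear operators on a separable Hilbert space H, and for ε > 0 define the limiting ε-near spectrum Λ_{e,ε}((T_n)) as the set of λ ∈ ℂ for which there exist a subsequence (n_k) and unit vectors x_k ∈ dom(T_{n_k}) with x_k ⇀ 0 weakly and ‖(T_{n_k} − λ)x_k‖ → ε; define the limiting essential spectrum σ_e((T_n)) analogously with ‖(T_{n_k} − λ)x_k‖ → 0. Then ⋂_{ε>0} ⋃_{δ∈(0,ε]} Λ_{e,δ}((T_n)) ⊆ σ_e((T_n)). -/

import Mathlib

open scoped InnerProductSpace
open Filter Topology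

variable {H : Type*} [NormedAddCommGroup H] [InnerProductSpace ℂ H] [CompleteSpace H]

/-- The limiting `δ`-near spectrum `Λ_{e,δ}((Tₙ))` of a sequence of (generally unbounded)
operators `Tₙ`: the set of `λ ∈ ℂ` for which there are a subsequence `(n_k)` and unit
vectors `x_k ∈ dom T_{n_k}` with `x_k ⇀ 0` weakly and `‖(T_{n_k} − λ) x_k‖ → δ`.
For `δ = 0` this is the limiting essential spectrum `σ_e((Tₙ))`. -/
def limitingNearSpectrum (T : ℕ → (H →ₗ.[ℂ] H)) (δ : ℝ) : Set ℂ :=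
  {lam : ℂ | ∃ n : ℕ → ℕ, StrictMono n ∧
    ∃ x : (k : ℕ) → (T (n k)).domain,
      (∀ k, ‖(x k : H)‖ = 1) ∧
      (∀ v : H, Tendsto (fun k => ⟪v, ((x k : H))⟫_ℂ) atTop (𝓝 0)) ∧
      Tendsto (fun k => ‖T (n k) (x k) - lam • ((x k : H))‖) atTop (𝓝 δ)}

/-- The limiting essential spectrum `σ_e((Tₙ))`. -/
def limitingEssentialSpectrum (T : ℕ → (H →ₗ.[ℂ] H)) : Set ℂ :=
  limitingNearSpectrum T 0

/-- For a sequence `(Tₙ)` of densely defined operators on a separable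
Hilbert space, `⋂_{ε>0} ⋃_{δ ∈ (0,ε]} Λ_{e,δ}((Tₙ)) ⊆ σ_e((Tₙ))`. -/
theorem inter_union_limitingNearSpectrum_subset
    [TopologicalSpace.SeparableSpace H]
    (T : ℕ → (H →ₗ.[ℂ] H)) (hdense : ∀ n, Dense ((T n).domain : Set H)) :
    ⋂ ε ∈ Set.Ioi (0 : ℝ), ⋃ δ ∈ Set.Ioc (0 : ℝ) ε, limitingNearSpectrum T δ
      ⊆ limitingEssentialSpectrum T := by
  intro lam hlam
  simp only [Set.mem_iInter₂, Set.mem_iUnion₂] at hlam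
  have key : ∀ m : ℕ, ∃ δ ∈ Set.Ioc (0:ℝ) (1/((m:ℝ)+1)), lam ∈ limitingNearSpectrum T δ := by
    intro m
    have := hlam (1/((m:ℝ)+1)) (Set.mem_Ioi.2 (by positivity))
    simpa using this
  choose δ hδ hmem using key
  simp only [limitingNearSpectrum, Set.mem_setOf_eq] at hmem
  choose n hn x hx1 hx2 hx3 using hmem
  have : Nonempty H := ⟨0⟩
  let u := TopologicalSpace.denseSeq H
  have hu : DenseRange u := TopologicalSpace.denseRange_denseSeq H
  -- selection
  have sel : ∀ (m M : ℕ), ∃ k : ℕ,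
      M < n m k ∧ ‖T (n m k) (x m k) - lam • ((x m k : H))‖ < 2/((m:ℝ)+1) ∧
      ∀ j ≤ m, ‖⟪u j, ((x m k : H))⟫_ℂ‖ < 1/((m:ℝ)+1) := by
    intro m M
    have h1 : ∀ᶠ k in atTop, M < n m k :=
      (hn m).tendsto_atTop.eventually_gt_atTop M
    have h2 : ∀ᶠ k in atTop,
        ‖T (n m k) (x m k) - lam • ((x m k : H))‖ < 2/((m:ℝ)+1) := by
      refine (hx3 m).eventually_lt_const ?_
      have h := (hδ m).2
      have hp : (0:ℝ) < 1/((m:ℝ)+1) := by positivity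
      have h2d : 2/((m:ℝ)+1) = 2*(1/((m:ℝ)+1)) := by ring
      linarith
    have h3 : ∀ᶠ k in atTop, ∀ j ∈ Finset.range (m+1),
        ‖⟪u j, ((x m k : H))⟫_ℂ‖ < 1/((m:ℝ)+1) := by
      rw [Filter.eventually_all_finset]
      intro j _
      have hnorm : Tendsto (fun k => ‖⟪u j, ((x m k : H))⟫_ℂ‖) atTop (𝓝 0) := by
        simpa using (hx2 m (u j)).norm
      exact hnorm.eventually_lt_const (by positivity)
    obtain ⟨k, hk1, hk2, hk3⟩ := (h1.and (h2.and h3)).exists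
    exact ⟨k, hk1, hk2, fun j hj => hk3 j (Finset.mem_range.2 (Nat.lt_succ_of_le hj))⟩
  choose kf hk1 hk2 hk3 using sel
  -- recursive choice of indices
  let K : ℕ → ℕ := fun m => Nat.rec (kf 0 0) (fun m Km => kf (m+1) (n m Km)) m
  let N : ℕ → ℕ := fun m => n m (K m)
  have hres : ∀ m, ‖T (N m) (x m (K m)) - lam • ((x m (K m) : H))‖ < 2/((m:ℝ)+1) := by
    intro m
    cases m with
    | zero => exact hk2 0 0
    | succ p => exact hk2 (p+1) (N p)
  have hinner : ∀ m, ∀ j ≤ m, ‖⟪u j, ((x m (K m) : H))⟫_ℂ‖ < 1/((m:ℝ)+1) := by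
    intro m
    cases m with
    | zero => exact hk3 0 0
    | succ p => exact hk3 (p+1) (N p)
  have hNmono : StrictMono N := by
    apply strictMono_nat_of_lt_succ
    intro m
    exact hk1 (m+1) (N m)
  refine ⟨N, hNmono, fun m => x m (K m), fun m => hx1 m (K m), ?_, ?_⟩
  · -- weak convergence
    intro v
    rw [NormedAddCommGroup.tendsto_nhds_zero]
    intro ε hε
    obtain ⟨j, hj⟩ : ∃ j, dist v (u j) < ε/2 := hu.exists_dist_lt v (half_pos hε)
    obtain ⟨M, hM⟩ : ∃ M : ℕ, 1/((M:ℝ)+1) < ε/2 := exists_nat_one_div_lt (half_pos hε)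
    rw [eventually_atTop]
    refine ⟨max j M, fun m hm => ?_⟩
    have hjm : j ≤ m := le_trans (le_max_left _ _) hm
    have hMm : M ≤ m := le_trans (le_max_right _ _) hm
    have h1 : ‖⟪u j, ((x m (K m) : H))⟫_ℂ‖ < 1/((m:ℝ)+1) := hinner m j hjm
    have h2 : (1:ℝ)/((m:ℝ)+1) ≤ 1/((M:ℝ)+1) := by
      apply one_div_le_one_div_of_le (by positivity)
      have : (M:ℝ) ≤ m := by exact_mod_cast hMm
      linarith
    have hcs : ‖⟪v - u j, ((x m (K m) : H))⟫_ℂ‖ ≤ ‖v - u j‖ * ‖((x m (K m) : H))‖ :=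
      norm_inner_le_norm _ _
    have hsplit : (⟪v, ((x m (K m) : H))⟫_ℂ)
        = ⟪v - u j, ((x m (K m) : H))⟫_ℂ + ⟪u j, ((x m (K m) : H))⟫_ℂ := by
      rw [inner_sub_left]; ring
    calc ‖⟪v, ((x m (K m) : H))⟫_ℂ‖
        ≤ ‖⟪v - u j, ((x m (K m) : H))⟫_ℂ‖ + ‖⟪u j, ((x m (K m) : H))⟫_ℂ‖ := by
          rw [hsplit]; exact norm_add_le _ _
      _ < ε/2 + ε/2 := by
          apply add_lt_add_of_le_of_lt
          · calc ‖⟪v - u j, ((x m (K m) : H))⟫_ℂ‖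
                ≤ ‖v - u j‖ * ‖((x m (K m) : H))‖ := hcs
              _ = ‖v - u j‖ := by rw [hx1 m (K m), mul_one]
              _ ≤ ε/2 := by rw [← dist_eq_norm]; exact le_of_lt hj
          · exact lt_of_lt_of_le h1 (le_trans h2 (le_of_lt hM))
      _ = ε := add_halves ε
  · -- residual to 0
    have hto : Tendsto (fun m : ℕ => 2/((m:ℝ)+1)) atTop (𝓝 0) := by
      have := tendsto_one_div_add_atTop_nhds_zero_nat.const_mul (2:ℝ)
      simpa [div_eq_mul_inv] using this
    exact squeeze_zero (fun m => norm_nonneg _) (fun m => le_of_lt (hres m)) hto
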